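/- Let α = 2π/13 and suppose q ∈ [1, √2] satisfies q²/4 ≤ 1 + q² − 2q·cos α. Then we reach a contradiction; i.e., no q ∈ [1, √2] satisfies q²/4 ≤ 1 + q² − 2q·cos(2π/13). Equivalently, for all q ∈ [1, √2], 1 + q² − 2q·cos(2π/13) < q²/4. -/

import Mathlib

open Real

lemma cos_lb : Real.cos (2 * π / 13) > 0.8852 := by
  have hpi_lt : π < 3.1416 := by
    linarith [Real.pi_lt_d6]
  have hpi_gt : π > 3.1415 := by linarith [Real.pi_gt_d6]
  set t : ℝ := π / 13 with ht
  have ht1 : t < 0.24167 := by rw [ht]; linarith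
  have ht0 : t > 0.24165 := by rw [ht]; linarith
  have habs : |t| ≤ 1 := by rw [abs_of_pos (by linarith : (0:ℝ) < t)]; linarith
  have hsb := Real.sin_bound habs
  rw [abs_of_pos (by linarith : (0:ℝ) < t)] at hsb
  have hs_le : Real.sin t ≤ t - t ^ 3 / 6 + t ^ 4 * (5 / 96) := by
    have := le_of_abs_le hsb
    nlinarith [mul_le_mul_of_nonneg_left (show t ≤ 1 by linarith) (pow_nonneg (by linarith : (0:ℝ) ≤ t) 4), pow_succ t 4]
  have hs_nonneg : 0 ≤ Real.sin t := by
    apply Real.sin_nonneg_of_nonneg_of_le_pi <;> nlinarith [Real.pi_gt_three]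
  have heq : 2 * π / 13 = 2 * t := by rw [ht]; ring
  rw [heq, Real.cos_two_mul']
  have h3 : t ^ 3 > 0.014111 := by
    have : (0.24165 : ℝ) ^ 3 < t ^ 3 :=
      pow_lt_pow_left₀ ht0 (by norm_num) (by norm_num)
    nlinarith
  have h4 : t ^ 4 < 0.003412 := by
    have : t ^ 4 < (0.24167 : ℝ) ^ 4 :=
      pow_lt_pow_left₀ ht1 (by linarith) (by norm_num)
    nlinarith
  have hub : Real.sin t ≤ 0.23950 := by nlinarith
  nlinarith [Real.sin_sq_add_cos_sq t]

theorem stmt8 : ∀ q ∈ Set.Icc (1 : ℝ) (Real.sqrt 2),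
    1 + q ^ 2 - 2 * q * Real.cos (2 * π / 13) < q ^ 2 / 4 := by
  intro q hq
  obtain ⟨h1, h2⟩ := hq
  have hc := cos_lb
  have hs2 : Real.sqrt 2 < 1.41422 := by
    rw [show (1.41422 : ℝ) = Real.sqrt (1.41422 ^ 2) by
      rw [Real.sqrt_sq]; norm_num]
    apply Real.sqrt_lt_sqrt <;> norm_num
  have hq2 : q < 1.41422 := lt_of_le_of_lt h2 hs2
  nlinarith [mul_nonneg (sub_nonneg.2 h1) (sub_nonneg.2 (le_of_lt hq2)), sq_nonneg q]
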